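/- The two-sided shift on N ≥ 2 symbols realizes every order pattern realized by the one-sided shift on N symbols; in particular, the two-sided shift on N symbols has no forbidden patterns of length L ≤ N+1. -/

import Mathlib

/-- The one-sided shift map. -/
def oshift {N : ℕ} (ω : ℕ → Fin N) : ℕ → Fin N := fun n => ω (n + 1)

/-- Lexicographic strict order on one-sided sequences. -/
def lexLt {N : ℕ} (ω ω' : ℕ → Fin N) : Prop :=
  ∃ n, (∀ k, k < n → ω k = ω' k) ∧ ω n < ω' n

/-- The two-sided shift map. -/
def tshift {N : ℕ} (ω : ℤ → Fin N) : ℤ → Fin N := fun n => ω (n + 1)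

/-- The right one-sided sequence of a bisequence. -/
def rightSeq {N : ℕ} (ω : ℤ → Fin N) : ℕ → Fin N := fun n => ω n

/-- The left one-sided sequence of a bisequence. -/
def leftSeq {N : ℕ} (ω : ℤ → Fin N) : ℕ → Fin N := fun n => ω (-(n + 1 : ℕ))

/-- The order on bisequences: compare right sequences lexicographically,
breaking ties by the left sequences. -/
def biLt {N : ℕ} (ω ω' : ℤ → Fin N) : Prop :=
  lexLt (rightSeq ω) (rightSeq ω') ∨
    (rightSeq ω = rightSeq ω' ∧ lexLt (leftSeq ω) (leftSeq ω'))

lemma oshift_iterate {N : ℕ} (ω : ℕ → Fin N) (m : ℕ) : ∀ n, (oshift^[m] ω) n = ω (n + m) := by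
  induction m generalizing ω with
  | zero => intro n; rfl
  | succ m ih =>
      intro n
      rw [Function.iterate_succ_apply, ih]
      rfl

lemma tshift_iterate {N : ℕ} (ω : ℤ → Fin N) (m : ℕ) : ∀ n, (tshift^[m] ω) n = ω (n + m) := by
  induction m generalizing ω with
  | zero => intro n; simp
  | succ m ih =>
      intro n
      rw [Function.iterate_succ_apply, ih]
      show ω (n + m + 1) = ω (n + (m + 1 : ℕ))
      congr 1
      push_cast
      ring

/-- Transfer of one-sided realization to two-sided realization. -/
lemma transfer_realize {N L : ℕ} (hN : 2 ≤ N) (π : Equiv.Perm (Fin L))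
    (h : ∃ ω : ℕ → Fin N, ∀ i j : Fin L, i < j →
        lexLt (oshift^[(π i : ℕ)] ω) (oshift^[(π j : ℕ)] ω)) :
    ∃ ω : ℤ → Fin N, ∀ i j : Fin L, i < j →
        biLt (tshift^[(π i : ℕ)] ω) (tshift^[(π j : ℕ)] ω) := by
  obtain ⟨ω, hω⟩ := h
  set Ω : ℤ → Fin N := fun n => if h0 : 0 ≤ n then ω n.toNat else ⟨0, by omega⟩ with hΩ
  have key : ∀ m : ℕ, rightSeq (tshift^[m] Ω) = oshift^[m] ω := by
    intro m
    funext n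
    rw [rightSeq, tshift_iterate, oshift_iterate]
    have h0 : (0:ℤ) ≤ (n:ℤ) + (m:ℤ) := by positivity
    rw [hΩ]
    simp only [dif_pos h0]
    have he : ((n:ℤ) + (m:ℤ)).toNat = n + m := by omega
    rw [he]
  refine ⟨Ω, fun i j hij => ?_⟩
  left
  rw [key, key]
  exact hω i j hij

open Fin.NatCast in
/-- The one-sided shift on `N` symbols realizes every pattern of length `L ≤ N + 1`. -/
lemma onesided_realize {N : ℕ} (hN : 2 ≤ N) (L : ℕ) (hL : L ≤ N + 1) (π : Equiv.Perm (Fin L)) :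
    ∃ ω : ℕ → Fin N, ∀ i j : Fin L, i < j →
        lexLt (oshift^[(π i : ℕ)] ω) (oshift^[(π j : ℕ)] ω) := by
  rcases Nat.eq_zero_or_pos L with hL0 | hL1
  · subst hL0
    exact ⟨fun _ => ⟨0, by omega⟩, fun i => i.elim0⟩
  haveI : NeZero L := ⟨by omega⟩
  -- ranks and positions
  set q : ℕ → ℕ := fun k => ((π.symm (k : Fin L) : Fin L) : ℕ) with hqdef
  set p : ℕ → ℕ := fun j => ((π (j : Fin L) : Fin L) : ℕ) with hpdef
  have hqlt : ∀ k, q k < L := fun k => (π.symm (k : Fin L)).isLt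
  have hplt : ∀ j, p j < L := fun j => (π (j : Fin L)).isLt
  have qcong : ∀ a b : ℕ, a % L = b % L → q a = q b := by
    intro a b h
    have : (a : Fin L) = (b : Fin L) := by
      apply Fin.ext
      rw [Fin.val_natCast, Fin.val_natCast, h]
    simp only [hqdef, this]
  have qinj : ∀ a b : ℕ, q a = q b → a % L = b % L := by
    intro a b h
    have h1 : π.symm (a : Fin L) = π.symm (b : Fin L) := Fin.ext h
    have h2 : (a : Fin L) = (b : Fin L) := π.symm.injective h1
    rw [← Fin.val_natCast a L, ← Fin.val_natCast b L, h2]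
  have ppq : ∀ k : ℕ, p (q k) = k % L := by
    intro k
    have h1 : ((q k : ℕ) : Fin L) = π.symm (k : Fin L) := by
      apply Fin.ext
      rw [Fin.val_natCast, Nat.mod_eq_of_lt (hqlt k)]
    show ((π ((q k : ℕ) : Fin L) : Fin L) : ℕ) = k % L
    rw [h1, Equiv.apply_symm_apply, Fin.val_natCast]
  have qpp : ∀ j : ℕ, q (p j) = j % L := by
    intro j
    have h1 : ((p j : ℕ) : Fin L) = π (j : Fin L) := by
      apply Fin.ext
      rw [Fin.val_natCast, Nat.mod_eq_of_lt (hplt j)]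
    show ((π.symm ((p j : ℕ) : Fin L) : Fin L) : ℕ) = j % L
    rw [h1, Equiv.symm_apply_apply, Fin.val_natCast]
  -- descent set
  set D : Finset ℕ :=
    (Finset.range (L-1)).filter (fun j => q (p (j+1) + 1) < q (p j + 1)) with hDdef
  -- bound on the number of descents
  have cardD : D.card < N := by
    have hsub : D ⊆ Finset.range (L-1) := Finset.filter_subset _ _
    rcases Nat.lt_or_ge L (N+1) with hc | hc
    · have := Finset.card_le_card hsub
      rw [Finset.card_range] at this
      omega
    · -- L = N + 1 ≥ 3
      have hLN : L = N + 1 := by omega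
      have hL3 : 3 ≤ L := by omega
      have hstrict : ∃ j ∈ Finset.range (L-1), j ∉ D := by
        by_contra hall
        push_neg at hall
        have hdesc : ∀ j, j < L-1 → q (p (j+1) + 1) < q (p j + 1) := by
          intro j hj
          have := hall j (Finset.mem_range.mpr hj)
          rw [hDdef, Finset.mem_filter] at this
          exact this.2
        have hdec : ∀ j, j ≤ L-1 → q (p j + 1) + j ≤ q (p 0 + 1) := by
          intro j
          induction j with
          | zero => intro _; omega
          | succ j ih =>
              intro hj
              have h1 := ih (by omega)
              have h2 := hdesc j (by omega)
              omega
        have h0 : q (p 0 + 1) ≤ L - 1 := by have := hqlt (p 0 + 1); omega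
        have hend := hdec (L-1) le_rfl
        have e1 : q (p 0 + 1) = L - 1 := by omega
        have e2 : q (p (L-1) + 1) = 0 := by omega
        -- translate to position equations
        have f1 : (p 0 + 1) % L = p (L-1) % L := by
          apply qinj
          rw [e1]
          rw [qpp (L-1)]
          rw [Nat.mod_eq_of_lt (by omega : L - 1 < L)]
        have f2 : (p (L-1) + 1) % L = p 0 % L := by
          apply qinj
          rw [e2, qpp 0]
          rw [Nat.mod_eq_of_lt (by omega : 0 < L)]
        have hp0 : p 0 < L := hplt 0
        have hpL : p (L-1) < L := hplt (L-1)
        rw [Nat.mod_eq_of_lt hpL] at f1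
        rw [Nat.mod_eq_of_lt hp0] at f2
        by_cases h1 : p 0 + 1 < L
        · rw [Nat.mod_eq_of_lt h1] at f1
          by_cases h2 : p (L-1) + 1 < L
          · rw [Nat.mod_eq_of_lt h2] at f2
            omega
          · have he : p (L-1) + 1 = L := by omega
            rw [he, Nat.mod_self] at f2
            omega
        · have he : p 0 + 1 = L := by omega
          rw [he, Nat.mod_self] at f1
          have h2 : p (L-1) + 1 < L := by omega
          rw [Nat.mod_eq_of_lt h2] at f2
          omega
      obtain ⟨j, hj1, hj2⟩ := hstrict
      have : D ⊂ Finset.range (L-1) :=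
        (Finset.ssubset_iff_of_subset hsub).mpr ⟨j, hj1, hj2⟩
      have := Finset.card_lt_card this
      rw [Finset.card_range] at this
      omega
  -- the letters
  set c : ℕ → ℕ := fun k => (D.filter (fun j => j < q k)).card with hcdef
  have hcN : ∀ k, c k < N := by
    intro k
    have h1 : c k ≤ D.card := Finset.card_le_card (Finset.filter_subset _ _)
    omega
  set ω : ℕ → Fin N := fun n => ⟨c n, hcN n⟩ with hωdef
  -- monotonicity of letters in rank
  have mono : ∀ a b : ℕ, q a ≤ q b → c a ≤ c b := by
    intro a b h
    apply Finset.card_le_card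
    apply Finset.monotone_filter_right
    intro x hx
    omega
  -- key step: equal letters and smaller rank propagate one step
  have step : ∀ a b : ℕ, c a = c b → q a < q b → q (a+1) < q (b+1) := by
    intro a b hc hq
    have hnd : ∀ j, q a ≤ j → j < q b → ¬ (q (p (j+1) + 1) < q (p j + 1)) := by
      intro j hj1 hj2 hdes
      have hjD : j ∈ D := by
        rw [hDdef, Finset.mem_filter, Finset.mem_range]
        exact ⟨by have := hqlt b; omega, hdes⟩
      have hss : (D.filter (fun x => x < q a)) ⊂ (D.filter (fun x => x < q b)) := by
        refine (Finset.ssubset_iff_of_subset ?_).mpr ?_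
        · apply Finset.monotone_filter_right
          intro x hx
          omega
        · refine ⟨j, Finset.mem_filter.mpr ⟨hjD, hj2⟩, fun hmem => ?_⟩
          have := (Finset.mem_filter.mp hmem).2
          omega
      have := Finset.card_lt_card hss
      have hca : c a = (D.filter (fun x => x < q a)).card := rfl
      have hcb : c b = (D.filter (fun x => x < q b)).card := rfl
      omega
    have chain : ∀ m, q a + m ≤ q b → q (p (q a) + 1) ≤ q (p (q a + m) + 1) := by
      intro m
      induction m with
      | zero => intro _; simp
      | succ m ih =>
          intro hm
          have h1 := ih (by omega)
          have h2 := hnd (q a + m) (by omega) (by omega)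
          show q (p (q a) + 1) ≤ q (p (q a + m + 1) + 1)
          omega
    have hend := chain (q b - q a) (by omega)
    have hba : q a + (q b - q a) = q b := by omega
    rw [hba] at hend
    have e1 : q (p (q a) + 1) = q (a + 1) := by
      apply qcong
      rw [ppq a, Nat.mod_add_mod]
    have e2 : q (p (q b) + 1) = q (b + 1) := by
      apply qcong
      rw [ppq b, Nat.mod_add_mod]
    rw [e1, e2] at hend
    rcases eq_or_lt_of_le hend with heq | hlt
    · exfalso
      have h1 : (a+1) % L = (b+1) % L := qinj _ _ heq
      have h2 : a % L = b % L := Nat.ModEq.add_right_cancel' 1 h1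
      have := qcong a b h2
      omega
    · exact hlt
  -- invariant along the cascade
  have inv : ∀ n (a b : ℕ), q a < q b → (∀ k, k < n → c (a+k) = c (b+k)) →
      q (a+n) < q (b+n) := by
    intro n
    induction n with
    | zero => intro a b hq _; simpa using hq
    | succ n ih =>
        intro a b hq hc
        have h1 := ih a b hq (fun k hk => hc k (by omega))
        have h2 := step (a+n) (b+n) (hc n (by omega)) h1
        have ea : a + (n+1) = (a+n)+1 := by omega
        have eb : b + (n+1) = (b+n)+1 := by omega
        rw [ea, eb]
        exact h2
  -- existence of a first difference
  have exist_ne : ∀ a b : ℕ, q a < q b → ∃ n, c (a+n) ≠ c (b+n) := by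
    intro a b hq
    by_contra h
    push_neg at h
    have hinv : ∀ n, q (a+n) < q (b+n) := fun n => inv n a b hq (fun k _ => h k)
    set d : ℕ := b % L + (L - a % L) with hddef
    have hdmod : (a + d) % L = b % L := by
      have h1 : a % L < L := Nat.mod_lt _ (by omega)
      have h2 : a % L ≤ a := Nat.mod_le _ _
      have h3 : a + d = L * (a / L) + (b % L + L) := by
        have := Nat.div_add_mod a L
        omega
      rw [h3, Nat.mul_add_mod, Nat.add_mod_right, Nat.mod_mod_of_dvd _ dvd_rfl]
    have hg : StrictMono (fun k => q (a + k * d)) := by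
      apply strictMono_nat_of_lt_succ
      intro k
      have h1 := hinv (k * d)
      have h2 : q (b + k * d) = q (a + (k+1) * d) := by
        apply qcong
        have he : a + (k+1) * d = (a + d) + k * d := by ring
        rw [he]
        exact (Nat.ModEq.add_right (k*d) hdmod.symm)
      rw [h2] at h1
      exact h1
    have h5 : L ≤ (fun k => q (a + k * d)) L := hg.le_apply
    simp only at h5
    have := hqlt (a + L * d)
    omega
  -- main comparison lemma
  have main : ∀ a b : ℕ, q a < q b →
      lexLt (fun n => ω (n + a)) (fun n => ω (n + b)) := by
    intro a b hq
    have hex := exist_ne a b hq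
    set n₀ := Nat.find hex with hn₀
    have hspec : c (a + n₀) ≠ c (b + n₀) := Nat.find_spec hex
    have hmin : ∀ k, k < n₀ → c (a+k) = c (b+k) := by
      intro k hk
      have := Nat.find_min hex hk
      exact not_ne_iff.mp this
    have hqn := inv n₀ a b hq hmin
    have hle := mono _ _ (le_of_lt hqn)
    have hlt : c (a + n₀) < c (b + n₀) := lt_of_le_of_ne hle hspec
    refine ⟨n₀, fun k hk => ?_, ?_⟩
    · show (⟨c (k + a), hcN _⟩ : Fin N) = ⟨c (k + b), hcN _⟩
      have h1 : c (k + a) = c (k + b) := by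
        rw [Nat.add_comm k a, Nat.add_comm k b]
        exact hmin k hk
      simp [h1]
    · show (⟨c (n₀ + a), hcN _⟩ : Fin N) < ⟨c (n₀ + b), hcN _⟩
      rw [Fin.mk_lt_mk, Nat.add_comm n₀ a, Nat.add_comm n₀ b]
      exact hlt
  refine ⟨ω, fun i j hij => ?_⟩
  have hqi : q ((π i : ℕ)) = (i : ℕ) := by
    have h1 : (((π i : ℕ) : ℕ) : Fin L) = π i := Fin.cast_val_eq_self (π i)
    show ((π.symm (((π i : ℕ) : ℕ) : Fin L) : Fin L) : ℕ) = (i : ℕ)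
    rw [h1, Equiv.symm_apply_apply]
  have hqj : q ((π j : ℕ)) = (j : ℕ) := by
    have h1 : (((π j : ℕ) : ℕ) : Fin L) = π j := Fin.cast_val_eq_self (π j)
    show ((π.symm (((π j : ℕ) : ℕ) : Fin L) : Fin L) : ℕ) = (j : ℕ)
    rw [h1, Equiv.symm_apply_apply]
  have hq : q ((π i : ℕ)) < q ((π j : ℕ)) := by
    rw [hqi, hqj]
    exact hij
  have hmain := main _ _ hq
  have hrw1 : oshift^[(π i : ℕ)] ω = fun n => ω (n + (π i : ℕ)) :=
    funext fun n => oshift_iterate ω _ n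
  have hrw2 : oshift^[(π j : ℕ)] ω = fun n => ω (n + (π j : ℕ)) :=
    funext fun n => oshift_iterate ω _ n
  rw [hrw1, hrw2]
  exact hmain

/-- The two-sided shift on `N ≥ 2` symbols realizes every order pattern
realized by the one-sided shift on `N` symbols; in particular, it has no
forbidden patterns of length `L ≤ N + 1`. -/
theorem twosided_realizes (N : ℕ) (hN : 2 ≤ N) :
    (∀ L : ℕ, ∀ π : Equiv.Perm (Fin L),
      (∃ ω : ℕ → Fin N, ∀ i j : Fin L, i < j →
          lexLt (oshift^[(π i : ℕ)] ω) (oshift^[(π j : ℕ)] ω)) →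
      (∃ ω : ℤ → Fin N, ∀ i j : Fin L, i < j →
          biLt (tshift^[(π i : ℕ)] ω) (tshift^[(π j : ℕ)] ω))) ∧
    (∀ L : ℕ, L ≤ N + 1 → ∀ π : Equiv.Perm (Fin L),
      ∃ ω : ℤ → Fin N, ∀ i j : Fin L, i < j →
        biLt (tshift^[(π i : ℕ)] ω) (tshift^[(π j : ℕ)] ω)) := by
  constructor
  · intro L π h
    exact transfer_realize hN π h
  · intro L hL π
    exact transfer_realize hN π (onesided_realize hN L hL π)
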